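/- Let n be a positive integer. Let R_i, S_i, M_i, N_i and R_j, S_j, M_j, N_j be n×n real matrices, and let Δ be an n×n real matrix. Define Z₁ᵢ = fromBlocks R_i I M_iᵀ 0, Z₂ⱼ = fromBlocks I S_j 0 N_jᵀ, Z₁ⱼ = fromBlocks R_j I M_jᵀ 0, and A_r = fromBlocks I 0 0 Δ. Let X_j be a symmetric 2n×2n real matrix with X_j · Z₁ⱼ = Z₂ⱼ. Then Z₁ⱼᵀ · X_j · A_r · Z₁ᵢ = fromBlocks R_i I (S_j·R_i + N_j·Δ·M_iᵀ) S_j. -/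
import Mathlib


open Matrix

/-- Block-matrix identity linearizing the Lyapunov boundary condition at a
controller switching surface: with the change of variables `X_j·Z₁ⱼ = Z₂ⱼ` and
the closed-loop reset matrix `A_r = diag(I, Δ)`, one has
`Z₁ⱼᵀ·X_j·A_r·Z₁ᵢ = [[R_i, I],[S_j·R_i + N_j·Δ·M_iᵀ, S_j]]`. -/
theorem stmt_8
    (n : ℕ) (hn : 0 < n)
    (Ri Si Mi Ni Rj Sj Mj Nj Δ : Matrix (Fin n) (Fin n) ℝ)
    (Xj : Matrix (Fin n ⊕ Fin n) (Fin n ⊕ Fin n) ℝ)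
    (hXjsym : Xjᵀ = Xj)
    (hXj : Xj * Matrix.fromBlocks Rj 1 Mjᵀ 0 = Matrix.fromBlocks 1 Sj 0 Njᵀ) :
    (Matrix.fromBlocks Rj 1 Mjᵀ 0)ᵀ * Xj * Matrix.fromBlocks 1 0 0 Δ *
        Matrix.fromBlocks Ri 1 Miᵀ 0 =
      Matrix.fromBlocks Ri 1 (Sj * Ri + Nj * Δ * Miᵀ) Sj := by
  have h1 : (Matrix.fromBlocks Rj 1 Mjᵀ 0)ᵀ * Xj
      = (Matrix.fromBlocks 1 Sj 0 Njᵀ)ᵀ := by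
    rw [← hXjsym, ← Matrix.transpose_mul, hXj]
  have h2 : (Matrix.fromBlocks 1 Sj 0 Njᵀ)ᵀ * Matrix.fromBlocks Rj 1 Mjᵀ 0
      = (Matrix.fromBlocks Rj 1 Mjᵀ 0)ᵀ * Matrix.fromBlocks 1 Sj 0 Njᵀ := by
    rw [← h1, Matrix.mul_assoc, hXj]
  have hS : Sjᵀ = Sj := by
    have := congrArg (fun M => M.toBlocks₂₂) h2
    simpa [Matrix.fromBlocks_transpose, Matrix.fromBlocks_multiply] using this
  rw [h1, Matrix.fromBlocks_transpose, Matrix.fromBlocks_multiply,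
    Matrix.fromBlocks_multiply]
  simp [hS, Matrix.transpose_one]
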